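/- Let d₁ < ... < d_n and v_k ≠ 0 for all k, and f(x) = 1 + Σ_k v_k²/(d_k - x). Then f is strictly increasing on each open interval (d_k, d_{k+1}), and hence f has exactly one root in each interval (d_k, d_{k+1}) for 1 ≤ k ≤ n-1, and exactly one root in (d_n, ∞). -/

import Mathlib

open Filter Set Topology

private lemma one_div_lt_one_div_of_mul_pos' {a b : ℝ} (hba : b < a) (h : 0 < a * b) :
    1 / a < 1 / b := by
  have ha : a ≠ 0 := fun h' => by simp [h'] at h
  have hb : b ≠ 0 := fun h' => by simp [h'] at h
  have key : 1 / b - 1 / a = (a - b) / (a * b) := by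
    rw [div_sub_div _ _ hb ha, mul_comm b a]
    norm_num
  have hpos : 0 < (a - b) / (a * b) := div_pos (by linarith) h
  linarith

private lemma secular_lt {n : ℕ} (hn : 0 < n) (d v : Fin n → ℝ) (hv : ∀ k, v k ≠ 0)
    {x y : ℝ} (hxy : x < y) (h : ∀ j, 0 < (d j - x) * (d j - y)) :
    1 + ∑ j, (v j) ^ 2 / (d j - x) < 1 + ∑ j, (v j) ^ 2 / (d j - y) := by
  have : Nonempty (Fin n) := ⟨⟨0, hn⟩⟩
  have hterm : ∀ j : Fin n, (v j) ^ 2 / (d j - x) < (v j) ^ 2 / (d j - y) := by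
    intro j
    have hv2 : 0 < (v j) ^ 2 := by have := hv j; positivity
    have hlt := one_div_lt_one_div_of_mul_pos' (show d j - y < d j - x by linarith) (h j)
    calc (v j) ^ 2 / (d j - x) = (v j) ^ 2 * (1 / (d j - x)) := by ring
      _ < (v j) ^ 2 * (1 / (d j - y)) := mul_lt_mul_of_pos_left hlt hv2
      _ = (v j) ^ 2 / (d j - y) := by ring
  have := Finset.sum_lt_sum_of_nonempty Finset.univ_nonempty (fun j _ => hterm j)
  linarith

private lemma secular_contOn {n : ℕ} (d v : Fin n → ℝ) {s : Set ℝ}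
    (hs : ∀ x ∈ s, ∀ j, d j ≠ x) :
    ContinuousOn (fun x => 1 + ∑ j, (v j) ^ 2 / (d j - x)) s := by
  apply continuousOn_const.add
  apply continuousOn_finset_sum
  intro j _
  exact continuousOn_const.div (continuousOn_const.sub continuousOn_id)
    (fun x hx => sub_ne_zero.2 (hs x hx j))

/-- the singular term tends to -∞ from the right of the pole -/
private lemma secular_tendsto_pole_right {n : ℕ} (d v : Fin n → ℝ)
    (hd : Function.Injective d) (hv : ∀ k, v k ≠ 0) (i : Fin n) :
    Tendsto (fun x => 1 + ∑ j, (v j) ^ 2 / (d j - x)) (𝓝[>] (d i)) atBot := by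
  have hsplit : ∀ x : ℝ, (1 : ℝ) + ∑ j, (v j) ^ 2 / (d j - x)
      = (1 + ∑ j ∈ Finset.univ.erase i, (v j) ^ 2 / (d j - x)) + (v i) ^ 2 / (d i - x) := by
    intro x
    rw [← Finset.sum_erase_add _ _ (Finset.mem_univ i)]
    ring
  simp only [hsplit]
  have hrest : Tendsto (fun x => 1 + ∑ j ∈ Finset.univ.erase i, (v j) ^ 2 / (d j - x))
      (𝓝[>] (d i)) (𝓝 (1 + ∑ j ∈ Finset.univ.erase i, (v j) ^ 2 / (d j - d i))) := by
    apply Tendsto.mono_left _ nhdsWithin_le_nhds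
    apply Tendsto.add tendsto_const_nhds
    apply tendsto_finset_sum
    intro j hj
    have hne : d j - d i ≠ 0 := sub_ne_zero.2 (fun e => (Finset.mem_erase.1 hj).1 (hd e))
    exact Tendsto.div tendsto_const_nhds
      (tendsto_const_nhds.sub tendsto_id) hne
  have hmain : Tendsto (fun x => (v i) ^ 2 / (d i - x)) (𝓝[>] (d i)) atBot := by
    have h1 : Tendsto (fun x => x - d i) (𝓝[>] (d i)) (𝓝[>] 0) := by
      apply tendsto_nhdsWithin_of_tendsto_nhds_of_eventually_within
      · have : Tendsto (fun x => x - d i) (𝓝 (d i)) (𝓝 (d i - d i)) :=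
          tendsto_id.sub tendsto_const_nhds
        simpa using this.mono_left nhdsWithin_le_nhds
      · filter_upwards [self_mem_nhdsWithin] with x hx
        exact sub_pos.2 (Set.mem_Ioi.1 hx)
    have h2 : Tendsto (fun x => (x - d i)⁻¹) (𝓝[>] (d i)) atTop := h1.inv_tendsto_nhdsGT_zero
    have hv2 : 0 < (v i) ^ 2 := by have := hv i; positivity
    have h3 : Tendsto (fun x => (v i) ^ 2 * (x - d i)⁻¹) (𝓝[>] (d i)) atTop :=
      h2.const_mul_atTop hv2
    have h4 : Tendsto (fun x => -((v i) ^ 2 * (x - d i)⁻¹)) (𝓝[>] (d i)) atBot :=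
      tendsto_neg_atTop_atBot.comp h3
    have heq : ∀ x : ℝ, (v i) ^ 2 / (d i - x) = -((v i) ^ 2 * (x - d i)⁻¹) := by
      intro x
      rw [div_eq_mul_inv, show d i - x = -(x - d i) by ring, inv_neg, mul_neg]
    simpa only [heq] using h4
  exact hrest.add_atBot hmain

/-- the singular term tends to +∞ from the left of the pole -/
private lemma secular_tendsto_pole_left {n : ℕ} (d v : Fin n → ℝ)
    (hd : Function.Injective d) (hv : ∀ k, v k ≠ 0) (i : Fin n) :
    Tendsto (fun x => 1 + ∑ j, (v j) ^ 2 / (d j - x)) (𝓝[<] (d i)) atTop := by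
  have hsplit : ∀ x : ℝ, (1 : ℝ) + ∑ j, (v j) ^ 2 / (d j - x)
      = (1 + ∑ j ∈ Finset.univ.erase i, (v j) ^ 2 / (d j - x)) + (v i) ^ 2 / (d i - x) := by
    intro x
    rw [← Finset.sum_erase_add _ _ (Finset.mem_univ i)]
    ring
  simp only [hsplit]
  have hrest : Tendsto (fun x => 1 + ∑ j ∈ Finset.univ.erase i, (v j) ^ 2 / (d j - x))
      (𝓝[<] (d i)) (𝓝 (1 + ∑ j ∈ Finset.univ.erase i, (v j) ^ 2 / (d j - d i))) := by
    apply Tendsto.mono_left _ nhdsWithin_le_nhds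
    apply Tendsto.add tendsto_const_nhds
    apply tendsto_finset_sum
    intro j hj
    have hne : d j - d i ≠ 0 := sub_ne_zero.2 (fun e => (Finset.mem_erase.1 hj).1 (hd e))
    exact Tendsto.div tendsto_const_nhds (tendsto_const_nhds.sub tendsto_id) hne
  have hmain : Tendsto (fun x => (v i) ^ 2 / (d i - x)) (𝓝[<] (d i)) atTop := by
    have h1 : Tendsto (fun x => d i - x) (𝓝[<] (d i)) (𝓝[>] 0) := by
      apply tendsto_nhdsWithin_of_tendsto_nhds_of_eventually_within
      · have : Tendsto (fun x => d i - x) (𝓝 (d i)) (𝓝 (d i - d i)) :=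
          tendsto_const_nhds.sub tendsto_id
        simpa using this.mono_left nhdsWithin_le_nhds
      · filter_upwards [self_mem_nhdsWithin] with x hx
        exact sub_pos.2 (Set.mem_Iio.1 hx)
    have h2 : Tendsto (fun x => (d i - x)⁻¹) (𝓝[<] (d i)) atTop := h1.inv_tendsto_nhdsGT_zero
    have hv2 : 0 < (v i) ^ 2 := by have := hv i; positivity
    have h3 : Tendsto (fun x => (v i) ^ 2 * (d i - x)⁻¹) (𝓝[<] (d i)) atTop :=
      h2.const_mul_atTop hv2
    simpa only [div_eq_mul_inv] using h3
  exact hrest.add_atTop hmain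

private lemma secular_tendsto_atTop {n : ℕ} (d v : Fin n → ℝ) :
    Tendsto (fun x => 1 + ∑ j, (v j) ^ 2 / (d j - x)) atTop (𝓝 1) := by
  have hsum : Tendsto (fun x => ∑ j, (v j) ^ 2 / (d j - x)) atTop (𝓝 0) := by
    rw [show (0 : ℝ) = ∑ _j : Fin n, (0 : ℝ) by simp]
    apply tendsto_finset_sum
    intro j _
    have hden : Tendsto (fun x : ℝ => x - d j) atTop atTop :=
      tendsto_atTop_add_const_right _ _ tendsto_id
    have h1 : Tendsto (fun x : ℝ => (v j) ^ 2 / (x - d j)) atTop (𝓝 0) :=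
      tendsto_const_nhds.div_atTop hden
    have heq : ∀ x : ℝ, (v j) ^ 2 / (d j - x) = -((v j) ^ 2 / (x - d j)) := by
      intro x
      rw [div_eq_mul_inv, div_eq_mul_inv, show d j - x = -(x - d j) by ring, inv_neg, mul_neg]
    simp only [heq]
    simpa using h1.neg
  simpa using tendsto_const_nhds.add hsum

/-- the secular function is strictly increasing on each interval
(d_k, d_{k+1}) and has exactly one root there, and exactly one root in (d_n, ∞). -/
theorem secular_unique_roots {n : ℕ} (hn : 0 < n) (d v : Fin n → ℝ)
    (hd : StrictMono d) (hv : ∀ k, v k ≠ 0) :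
    (∀ k : Fin n, ∀ hk : (k : ℕ) + 1 < n,
      StrictMonoOn (fun x : ℝ => 1 + ∑ j, (v j) ^ 2 / (d j - x))
        (Set.Ioo (d k) (d ⟨(k : ℕ) + 1, hk⟩)) ∧
      ∃! x : ℝ, x ∈ Set.Ioo (d k) (d ⟨(k : ℕ) + 1, hk⟩) ∧
        1 + ∑ j, (v j) ^ 2 / (d j - x) = 0) ∧
    (∃! x : ℝ, x ∈ Set.Ioi (d ⟨n - 1, by omega⟩) ∧
      1 + ∑ j, (v j) ^ 2 / (d j - x) = 0) := by
  set f : ℝ → ℝ := fun x => 1 + ∑ j, (v j) ^ 2 / (d j - x) with hf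
  constructor
  · intro k hk
    set k' : Fin n := ⟨(k : ℕ) + 1, hk⟩ with hk'
    have hab : d k < d k' := hd (Fin.lt_def.2 (show (k : ℕ) < (k : ℕ) + 1 from Nat.lt_succ_self _))
    -- every d j lies outside (d k, d k')
    have hout : ∀ j : Fin n, d j ≤ d k ∨ d k' ≤ d j := by
      intro j
      rcases le_or_gt (j : ℕ) (k : ℕ) with h | h
      · exact Or.inl (hd.monotone (Fin.le_def.2 h))
      · exact Or.inr (hd.monotone (Fin.le_def.2 (by simpa [hk'] using h)))
    have hmono : StrictMonoOn f (Set.Ioo (d k) (d k')) := by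
      intro x hx y hy hxy
      apply secular_lt hn d v hv hxy
      intro j
      rcases hout j with h | h
      · have h1 : d j - x < 0 := by have := hx.1; linarith
        have h2 : d j - y < 0 := by have := hy.1; linarith
        exact mul_pos_of_neg_of_neg h1 h2
      · have h1 : 0 < d j - x := by have := hx.2; linarith
        have h2 : 0 < d j - y := by have := hy.2; linarith
        exact mul_pos h1 h2
    refine ⟨hmono, ?_⟩
    -- existence of a root
    have hbot : Tendsto f (𝓝[>] (d k)) atBot :=
      secular_tendsto_pole_right d v hd.injective hv k
    have htop : Tendsto f (𝓝[<] (d k')) atTop :=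
      secular_tendsto_pole_left d v hd.injective hv k'
    have hmem : ∀ᶠ x in 𝓝[>] (d k), x ∈ Set.Ioo (d k) (d k') :=
      Ioo_mem_nhdsGT_of_mem ⟨le_refl _, hab⟩
    obtain ⟨a', hfa', ha'⟩ :=
      ((hbot.eventually (eventually_lt_atBot 0)).and hmem).exists
    have hmem2 : ∀ᶠ x in 𝓝[<] (d k'), x ∈ Set.Ioo a' (d k') :=
      Ioo_mem_nhdsLT_of_mem ⟨ha'.2, le_refl _⟩
    obtain ⟨b', hfb', hb'⟩ :=
      ((htop.eventually (eventually_gt_atTop 0)).and hmem2).exists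
    have hsub : Set.Icc a' b' ⊆ Set.Ioo (d k) (d k') := by
      intro x hx
      exact ⟨lt_of_lt_of_le ha'.1 hx.1, lt_of_le_of_lt hx.2 hb'.2⟩
    have hcont : ContinuousOn f (Set.Icc a' b') := by
      apply secular_contOn d v
      intro x hx j
      have hxm := hsub hx
      rcases hout j with h | h
      · exact fun e => absurd (e ▸ h) (not_le.2 hxm.1)
      · exact fun e => absurd (e ▸ h) (not_le.2 hxm.2)
    obtain ⟨c, hc, hfc⟩ := intermediate_value_Ioo hb'.1.le hcont
      (show (0 : ℝ) ∈ Set.Ioo (f a') (f b') from ⟨hfa', hfb'⟩)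
    have hcmem : c ∈ Set.Ioo (d k) (d k') :=
      hsub ⟨hc.1.le, hc.2.le⟩
    refine ⟨c, ⟨hcmem, hfc⟩, ?_⟩
    rintro y ⟨hy, hfy⟩
    exact hmono.injOn hy hcmem (hfy.trans hfc.symm)
  · -- interval (d_{n-1}, ∞)
    set i : Fin n := ⟨n - 1, by omega⟩ with hi
    have hmax : ∀ j : Fin n, d j ≤ d i := by
      intro j
      have hj := j.2
      exact hd.monotone (Fin.le_def.2 (show (j : ℕ) ≤ n - 1 by omega))
    have hmono : StrictMonoOn f (Set.Ioi (d i)) := by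
      intro x hx y hy hxy
      apply secular_lt hn d v hv hxy
      intro j
      have h1 : d j - x < 0 := by have := hmax j; simp only [Set.mem_Ioi] at hx; linarith
      have h2 : d j - y < 0 := by have := hmax j; simp only [Set.mem_Ioi] at hy; linarith
      exact mul_pos_of_neg_of_neg h1 h2
    have hbot : Tendsto f (𝓝[>] (d i)) atBot :=
      secular_tendsto_pole_right d v hd.injective hv i
    have hmem : ∀ᶠ x in 𝓝[>] (d i), x ∈ Set.Ioi (d i) := self_mem_nhdsWithin
    obtain ⟨a', hfa', ha'⟩ :=
      ((hbot.eventually (eventually_lt_atBot 0)).and hmem).exists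
    have h1 : Tendsto f atTop (𝓝 1) := secular_tendsto_atTop d v
    have hev : ∀ᶠ x in atTop, 0 < f x := h1.eventually (eventually_gt_nhds zero_lt_one)
    obtain ⟨b', hfb', hb'⟩ := (hev.and (eventually_gt_atTop a')).exists
    have hsub : Set.Icc a' b' ⊆ Set.Ioi (d i) := by
      intro x hx
      exact lt_of_lt_of_le ha' hx.1
    have hcont : ContinuousOn f (Set.Icc a' b') := by
      apply secular_contOn d v
      intro x hx j
      have hxm := hsub hx
      have := hmax j
      simp only [Set.mem_Ioi] at hxm
      exact fun e => by linarith [e ▸ this]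
    obtain ⟨c, hc, hfc⟩ := intermediate_value_Ioo hb'.le hcont
      (show (0 : ℝ) ∈ Set.Ioo (f a') (f b') from ⟨hfa', hfb'⟩)
    have hcmem : c ∈ Set.Ioi (d i) := hsub ⟨hc.1.le, hc.2.le⟩
    refine ⟨c, ⟨hcmem, hfc⟩, ?_⟩
    rintro y ⟨hy, hfy⟩
    exact hmono.injOn hy hcmem (hfy.trans hfc.symm)
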